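/- arXiv:2110.09026 — 5 statements merged into one kernel-verified Lean document; each statement's English description precedes it below -/
import Mathlib

section
/- Let X be a type of variables, φ a Boolean formula over X given semantically as a predicate on assignments σ : X → Bool, and I ⊆ P ⊆ X. If I is an independent support of P for φ, then the map sending the restriction σ↓P of a solution σ to its further restriction σ↓I is a well-defined bijection from the set {σ↓P : σ a solution of φ} onto the set {σ↓I : σ a solution of φ}; in particular these two sets have equal cardinality. -/
/-- `I` is an independent support of `P` for `φ`: any two solutions of `φ` that
agree on `I` also agree on `P`. -/
def IndepSupport {X : Type*} (φ : (X → Bool) → Prop) (I P : Set X) : Prop :=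
  ∀ σ₁ σ₂ : X → Bool, φ σ₁ → φ σ₂ → (∀ i ∈ I, σ₁ i = σ₂ i) → ∀ p ∈ P, σ₁ p = σ₂ p

/-- If `I` is an independent support of `P` for `φ`, then the restriction map
`σ↓P ↦ σ↓I` is a bijection from `{σ↓P : σ ⊨ φ}` onto `{σ↓I : σ ⊨ φ}`;
in particular the two sets have equal cardinality. -/
theorem indepSupport_bijOn_restrict {X : Type*} (φ : (X → Bool) → Prop)
    (I P : Set X) (hIP : I ⊆ P) (h : IndepSupport φ I P) :
    Set.BijOn (fun (g : P → Bool) (i : I) => g (Set.inclusion hIP i))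
      {g : P → Bool | ∃ σ : X → Bool, φ σ ∧ g = fun p : P => σ p.1}
      {g : I → Bool | ∃ σ : X → Bool, φ σ ∧ g = fun i : I => σ i.1} ∧
    Cardinal.mk {g : P → Bool | ∃ σ : X → Bool, φ σ ∧ g = fun p : P => σ p.1} =
      Cardinal.mk {g : I → Bool | ∃ σ : X → Bool, φ σ ∧ g = fun i : I => σ i.1} := by
  have hbij : Set.BijOn (fun (g : P → Bool) (i : I) => g (Set.inclusion hIP i))
      {g : P → Bool | ∃ σ : X → Bool, φ σ ∧ g = fun p : P => σ p.1}
      {g : I → Bool | ∃ σ : X → Bool, φ σ ∧ g = fun i : I => σ i.1} := by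
    refine ⟨?_, ?_, ?_⟩
    · rintro g ⟨σ, hσ, rfl⟩
      exact ⟨σ, hσ, rfl⟩
    · rintro g₁ ⟨σ₁, hσ₁, rfl⟩ g₂ ⟨σ₂, hσ₂, rfl⟩ heq
      funext p
      exact h σ₁ σ₂ hσ₁ hσ₂
        (fun i hi => congrFun heq ⟨i, hi⟩) p.1 p.2
    · rintro g ⟨σ, hσ, rfl⟩
      exact ⟨fun p : P => σ p.1, ⟨σ, hσ, rfl⟩, rfl⟩
  exact ⟨hbij, Cardinal.mk_congr (Set.BijOn.equiv _ hbij)⟩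
end

section
/- Let X be a type of variables, φ a Boolean formula over X given semantically as a predicate on assignments σ : X → Bool, I ⊆ P ⊆ X, and x ∈ I. Suppose I is an independent support of P for φ. Then I \ {x} is an independent support of P for φ if and only if x is implicitly defined by I \ {x} for φ. -/
/-- `x` is implicitly defined by `I` for `φ`: any two solutions of `φ` that agree
on `I` assign the same value to `x`. -/
def ImplicitlyDefined {X : Type*} (φ : (X → Bool) → Prop) (I : Set X) (x : X) : Prop :=
  ∀ σ₁ σ₂ : X → Bool, φ σ₁ → φ σ₂ → (∀ i ∈ I, σ₁ i = σ₂ i) → σ₁ x = σ₂ x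

/-- Given an independent support `I` of `P` and `x ∈ I`, the set `I \ {x}` is an
independent support of `P` iff `x` is implicitly defined by `I \ {x}`. -/
theorem indepSupport_erase_iff {X : Type*} (φ : (X → Bool) → Prop)
    (I P : Set X) (x : X) (hIP : I ⊆ P) (hx : x ∈ I)
    (h : IndepSupport φ I P) :
    IndepSupport φ (I \ {x}) P ↔ ImplicitlyDefined φ (I \ {x}) x := by
  constructor
  · intro h' σ₁ σ₂ h1 h2 hag
    exact h' σ₁ σ₂ h1 h2 hag x (hIP hx)
  · intro hd σ₁ σ₂ h1 h2 hag p hp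
    refine h σ₁ σ₂ h1 h2 (fun i hi => ?_) p hp
    by_cases hix : i = x
    · subst hix; exact hd σ₁ σ₂ h1 h2 hag
    · exact hag i ⟨hi, hix⟩
end

section
/- Let X be a type of variables, φ a Boolean formula over X given semantically as a predicate on assignments σ : X → Bool, and P ⊆ X. Suppose I₀, I₁, …, I_m is a finite sequence of subsets of X with I₀ = P such that for each k < m there exists a variable x_k ∈ I_k with I_{k+1} = I_k \ {x_k} and x_k is implicitly defined by I_k \ {x_k} for φ. Then I_m is an independent support of P for φ. (Soundness of the iterative variable-elimination procedure underlying SimpleSearch and IntegratedImplicit.) -/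
/-- Soundness of the iterative variable-elimination procedure: starting from
`I 0 = P` and repeatedly removing a variable `x_k ∈ I k` that is implicitly
defined by `I k \ {x_k}`, the final set `I m` is an independent support of `P`. -/
theorem iterative_elimination_sound {X : Type*} (φ : (X → Bool) → Prop)
    (P : Set X) (m : ℕ) (I : ℕ → Set X) (h0 : I 0 = P)
    (hstep : ∀ k < m, ∃ x ∈ I k,
        I (k + 1) = I k \ {x} ∧ ImplicitlyDefined φ (I k \ {x}) x) :
    I m ⊆ P ∧ IndepSupport φ (I m) P := by
  have key : ∀ j ≤ m, I m ⊆ I (m - j) ∧ IndepSupport φ (I m) (I (m - j)) := by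
    intro j
    induction j with
    | zero =>
      intro _
      simp only [Nat.sub_zero]
      exact ⟨le_rfl, fun σ₁ σ₂ _ _ h => h⟩
    | succ j ih =>
      intro hj
      have hjm : j ≤ m := Nat.le_of_succ_le hj
      obtain ⟨hsub, hind⟩ := ih hjm
      set k := m - (j + 1) with hk
      have hkm : k < m := by omega
      have hk1 : m - j = k + 1 := by omega
      rw [hk1] at hsub hind
      obtain ⟨x, hxI, heq, himp⟩ := hstep k hkm
      rw [heq] at hsub hind
      constructor
      · exact hsub.trans (Set.diff_subset)
      · intro σ₁ σ₂ h₁ h₂ hagree p hp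
        have hagree' : ∀ i ∈ I k \ {x}, σ₁ i = σ₂ i :=
          hind σ₁ σ₂ h₁ h₂ hagree
        rcases eq_or_ne p x with rfl | hne
        · exact himp σ₁ σ₂ h₁ h₂ hagree'
        · exact hagree' p ⟨hp, hne⟩
  have := key m le_rfl
  simpa [h0] using this
end

section
/- Let X be a type of variables, φ a Boolean formula over X given semantically as a predicate on assignments σ : X → Bool, and I ⊆ P ⊆ X. Suppose I is an independent support of P for φ. Then I is a minimal independent support of P for φ (i.e., no proper subset of I is an independent support of P) if and only if no variable x ∈ I is implicitly defined by I \ {x} for φ. -/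
/-- An independent support `I` of `P` is minimal (no proper subset of `I` is an
independent support of `P`) iff no variable `x ∈ I` is implicitly defined by
`I \ {x}`. -/
theorem minimal_indepSupport_iff {X : Type*} (φ : (X → Bool) → Prop)
    (I P : Set X) (hIP : I ⊆ P) (h : IndepSupport φ I P) :
    (∀ J : Set X, J ⊂ I → ¬ IndepSupport φ J P) ↔
      ∀ x ∈ I, ¬ ImplicitlyDefined φ (I \ {x}) x := by
  constructor
  · intro hmin x hx hdef
    refine hmin (I \ {x}) ⟨Set.diff_subset, fun hsub => (hsub hx).2 rfl⟩ ?_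
    intro σ₁ σ₂ h1 h2 hag p hp
    have hI : ∀ i ∈ I, σ₁ i = σ₂ i := by
      intro i hi
      by_cases hix : i = x
      · subst hix; exact hdef σ₁ σ₂ h1 h2 hag
      · exact hag i ⟨hi, hix⟩
    exact h σ₁ σ₂ h1 h2 hI p hp
  · intro hnd J hJ hJsup
    have hJI := hJ.1
    obtain ⟨x, hxI, hxJ⟩ := Set.exists_of_ssubset hJ
    refine hnd x hxI ?_
    intro σ₁ σ₂ h1 h2 hag
    have : ∀ i ∈ J, σ₁ i = σ₂ i := fun i hi =>
      hag i ⟨hJI hi, fun hix => hxJ (hix ▸ hi)⟩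
    exact hJsup σ₁ σ₂ h1 h2 this x (hIP hxI)
end

section
/- Let X be a type of variables, φ a Boolean formula over X given semantically as a predicate on assignments σ : X → Bool, P ⊆ X a projection set, and D ⊆ P a set of 'gate-defined' variables. Suppose for each v ∈ D there is a set of input variables N(v) ⊆ P and a function f_v : (N(v) → Bool) → Bool such that every solution σ of φ satisfies σ(v) = f_v(σ↓N(v)). Suppose further that the relation r on D given by r u v ↔ u ∈ N(v) is well-founded (i.e., the gate graph restricted to D is acyclic). Then P \ D is an independent support of P for φ. (Correctness of the explicit, gate-identification phase: removing a feedback vertex set W together with keeping the roots, so that the remaining gate-defined variables form an acyclic subgraph, yields an independent support W ∪ Root(G).) -/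
/-- Correctness of the explicit gate-identification phase: if every variable
`v` in `D ⊆ P` is computed by a gate `f v` from its inputs `N v ⊆ P` on every
solution of `φ`, and the gate graph restricted to `D` is acyclic (the
input-of relation on `D` is well-founded), then `P \ D` is an independent
support of `P` for `φ`. -/
theorem gate_identification_indepSupport {X : Type*} (φ : (X → Bool) → Prop)
    (P D : Set X) (hDP : D ⊆ P)
    (N : X → Set X) (f : (v : X) → ((N v) → Bool) → Bool)
    (hNP : ∀ v ∈ D, N v ⊆ P)
    (hgate : ∀ v ∈ D, ∀ σ : X → Bool, φ σ → σ v = f v (fun i => σ i.1))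
    (hacyc : WellFounded (fun u v : D => (u : X) ∈ N (v : X))) :
    IndepSupport φ (P \ D) P := by
  intro σ₁ σ₂ h₁ h₂ hagree
  have key : ∀ d : D, σ₁ (d : X) = σ₂ (d : X) := by
    intro d
    induction d using hacyc.induction with
    | _ d ih =>
      rw [hgate d d.2 σ₁ h₁, hgate d d.2 σ₂ h₂]
      congr 1
      funext i
      by_cases hiD : (i : X) ∈ D
      · exact ih ⟨i, hiD⟩ i.2
      · exact hagree i ⟨hNP d d.2 i.2, hiD⟩
  intro p hp
  by_cases hpD : p ∈ D
  · exact key ⟨p, hpD⟩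
  · exact hagree p ⟨hp, hpD⟩
end
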